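/- Let N, d, k, r be positive integers with k ≤ N, and let rows : Fin r → (Fin N → Fin d) satisfy the packing property of strength k: for every subset T ⊆ Fin N with |T| = k, the map i ↦ (rows i) restricted to T is injective. Let a : Fin r → ℂ and let ψ : (Fin N → Fin d) → ℂ be the state with ψ(rows i) = a_i and ψ(x) = 0 for x outside the image of rows. Then for every subset S ⊆ Fin N with |S| = N − k, the marginal ρ_S(ψ) is diagonal in the computational basis: for all x, y : {i // i ∈ S} → Fin d, ρ_S(ψ) x y = 0 if x ≠ y, and ρ_S(ψ) x x = ∑_{i : (rows i)|_S = x} |a_i|². -/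

import Mathlib

open Finset

/-- Combine `x` defined on `S` with `z` defined on the complement of `S`
into a full assignment `Fin N → Fin d`. -/
def joinFun {N d : ℕ} (S : Finset (Fin N))
    (x : {i // i ∈ S} → Fin d) (z : {i // i ∉ S} → Fin d) : Fin N → Fin d :=
  fun i => if h : i ∈ S then x ⟨i, h⟩ else z ⟨i, h⟩

/-- The marginal (reduced density matrix) of the pure state `ψ` on the parties `S`. -/
noncomputable def marginal {N d : ℕ} (S : Finset (Fin N)) (ψ : (Fin N → Fin d) → ℂ)
    (x y : {i // i ∈ S} → Fin d) : ℂ :=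
  ∑ z : {i // i ∉ S} → Fin d,
    ψ (joinFun S x z) * (starRingEnd ℂ) (ψ (joinFun S y z))

/-- `ψ` is a unit vector. -/
def UnitVec {N d : ℕ} (ψ : (Fin N → Fin d) → ℂ) : Prop :=
  ∑ x, ‖ψ x‖ ^ 2 = 1

/-- `ψ` is genuinely multipartite entangled. -/
def GME {N d : ℕ} (ψ : (Fin N → Fin d) → ℂ) : Prop :=
  ∀ J : Finset (Fin N), J.Nonempty → J ≠ Finset.univ →
    ¬ ∃ (α : ({i // i ∈ J} → Fin d) → ℂ) (β : ({i // i ∉ J} → Fin d) → ℂ),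
      ∀ x z, ψ (joinFun J x z) = α x * β z

/-- `ψ` is uniquely determined by the family of marginals `𝓕` among pure states. -/
def UDP {N d : ℕ} (𝓕 : Finset (Finset (Fin N))) (ψ : (Fin N → Fin d) → ℂ) : Prop :=
  ∀ φ : (Fin N → Fin d) → ℂ, UnitVec φ →
    (∀ F ∈ 𝓕, marginal F φ = marginal F ψ) →
    ∃ c : ℂ, ‖c‖ = 1 ∧ φ = c • ψ

/-- `rows` is a packing array of strength `k`: in any `k` columns, every `k`-tuple
appears at most once. -/
def IsPackingArray {r N d : ℕ} (k : ℕ) (rows : Fin r → (Fin N → Fin d)) : Prop :=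
  ∀ T : Finset (Fin N), T.card = k →
    Function.Injective (fun i : Fin r => fun j : {x // x ∈ T} => rows i j.1)

/-- For a state supported on the rows of a packing array of
strength `k`, every `(N - k)`-body marginal is diagonal in the computational
basis, with diagonal entries the sums of `|aᵢ|²` over rows restricting to the
given tuple. -/
theorem packing_array_marginal_diagonal (N d k r : ℕ)
    (hN : 0 < N) (hd : 0 < d) (hk : 0 < k) (hr : 0 < r) (hkN : k ≤ N)
    (rows : Fin r → (Fin N → Fin d)) (hPA : IsPackingArray k rows)
    (a : Fin r → ℂ)
    (ψ : (Fin N → Fin d) → ℂ)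
    (hψrows : ∀ i, ψ (rows i) = a i)
    (hψzero : ∀ x : Fin N → Fin d, (∀ i, x ≠ rows i) → ψ x = 0) :
    ∀ S : Finset (Fin N), S.card = N - k →
      (∀ x y : {i // i ∈ S} → Fin d, x ≠ y → marginal S ψ x y = 0) ∧
      (∀ x : {i // i ∈ S} → Fin d,
        marginal S ψ x x =
          ((∑ i ∈ Finset.univ.filter
              (fun i : Fin r => (fun j : {v // v ∈ S} => rows i j.1) = x),
            ‖a i‖ ^ 2 : ℝ) : ℂ)) := by
  intro S hS
  have hScard : Sᶜ.card = k := by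
    rw [Finset.card_compl, hS, Fintype.card_fin]
    omega
  have key : ∀ i j : Fin r, (∀ v, v ∉ S → rows i v = rows j v) → i = j := by
    intro i j h
    exact hPA Sᶜ hScard (funext fun v => h v.1 (Finset.mem_compl.mp v.2))
  have hrowsinj : Function.Injective rows := fun i j h =>
    key i j (fun v _ => congrFun h v)
  have hψ2 : ∀ w : Fin N → Fin d,
      ψ w = ∑ i ∈ Finset.univ.filter (fun i => w = rows i), a i := by
    intro w
    by_cases h : ∃ i, w = rows i
    · obtain ⟨i, hi⟩ := h
      have hfil : Finset.univ.filter (fun j => w = rows j) = {i} := by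
        ext j
        simp only [Finset.mem_filter, Finset.mem_univ, true_and, Finset.mem_singleton, hi]
        exact ⟨fun h' => (hrowsinj h'.symm), fun h' => by rw [h']⟩
      rw [hfil, Finset.sum_singleton, hi, hψrows]
    · push_neg at h
      have hfil : Finset.univ.filter (fun j => w = rows j) = ∅ := by
        ext j; simp [h j]
      rw [hψzero w h, hfil, Finset.sum_empty]
  have hagree : ∀ (x y : {i // i ∈ S} → Fin d) (z : {i // i ∉ S} → Fin d)
      (i j : Fin r), joinFun S x z = rows i → joinFun S y z = rows j →
      i = j ∧ x = y := by
    intro x y z i j hi hj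
    have hij : i = j := by
      apply key
      intro v hv
      rw [← hi, ← hj]
      simp [joinFun, hv]
    refine ⟨hij, ?_⟩
    have hxy : joinFun S x z = joinFun S y z := by rw [hi, hj, hij]
    funext v
    have := congrFun hxy v.1
    simpa [joinFun, v.2] using this
  constructor
  · intro x y hxy
    unfold marginal
    apply Finset.sum_eq_zero
    intro z _
    rw [hψ2 (joinFun S x z), hψ2 (joinFun S y z)]
    rcases Finset.eq_empty_or_nonempty
        (Finset.univ.filter (fun i => joinFun S x z = rows i)) with he | ⟨i, hi⟩
    · rw [he, Finset.sum_empty, zero_mul]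
    · simp only [Finset.mem_filter, Finset.mem_univ, true_and] at hi
      have he : Finset.univ.filter (fun j => joinFun S y z = rows j) = ∅ := by
        ext j
        simp only [Finset.mem_filter, Finset.mem_univ, true_and,
          Finset.notMem_empty, iff_false]
        intro hj
        exact hxy (hagree x y z i j hi hj).2
      rw [he, Finset.sum_empty, map_zero, mul_zero]
  · intro x
    unfold marginal
    have step1 : ∀ z : {i // i ∉ S} → Fin d,
        ψ (joinFun S x z) * (starRingEnd ℂ) (ψ (joinFun S x z))
          = ∑ i : Fin r, if joinFun S x z = rows i
              then ((‖a i‖ ^ 2 : ℝ) : ℂ) else 0 := by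
      intro z
      rw [hψ2 (joinFun S x z)]
      rcases Finset.eq_empty_or_nonempty
          (Finset.univ.filter (fun i => joinFun S x z = rows i)) with he | ⟨i, hi⟩
      · rw [he, Finset.sum_empty, zero_mul]
        symm
        apply Finset.sum_eq_zero
        intro j _
        have hnj : ¬ joinFun S x z = rows j := by
          intro h
          have : j ∈ Finset.univ.filter (fun i => joinFun S x z = rows i) := by
            simp [h]
          simp [he] at this
        simp [hnj]
      · simp only [Finset.mem_filter, Finset.mem_univ, true_and] at hi
        have hfil : Finset.univ.filter (fun j => joinFun S x z = rows j) = {i} := by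
          ext j
          simp only [Finset.mem_filter, Finset.mem_univ, true_and, Finset.mem_singleton]
          exact ⟨fun hj => ((hagree x x z j i hj hi).1),
            fun h' => by rw [h']; exact hi⟩
        rw [hfil, Finset.sum_singleton]
        rw [Finset.sum_eq_single i]
        · rw [if_pos hi, Complex.mul_conj, Complex.sq_norm]
        · intro j _ hji
          rw [if_neg]
          intro hj
          exact hji ((hagree x x z j i hj hi).1)
        · intro h; exact absurd (Finset.mem_univ i) h
    rw [Finset.sum_congr rfl (fun z _ => step1 z), Finset.sum_comm]
    have hjoin : ∀ (i : Fin r) (z : {v : Fin N // v ∉ S} → Fin d),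
        joinFun S x z = rows i ↔
          ((fun j : {v // v ∈ S} => rows i j.1) = x ∧
            z = fun v : {v : Fin N // v ∉ S} => rows i v.1) := by
      intro i z
      constructor
      · intro h
        constructor
        · funext v
          have := congrFun h v.1
          simp only [joinFun, dif_pos v.2] at this
          rw [← this]
        · funext v
          have := congrFun h v.1
          simp only [joinFun, dif_neg v.2] at this
          rw [this]
      · rintro ⟨h1, h2⟩
        funext w
        by_cases hw : w ∈ S
        · simp only [joinFun, dif_pos hw]
          exact (congrFun h1 ⟨w, hw⟩).symm
        · simp only [joinFun, dif_neg hw, h2]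
    have step2 : ∀ i : Fin r,
        (∑ z : {v : Fin N // v ∉ S} → Fin d, if joinFun S x z = rows i
            then ((‖a i‖ ^ 2 : ℝ) : ℂ) else 0)
          = if (fun j : {v // v ∈ S} => rows i j.1) = x
            then ((‖a i‖ ^ 2 : ℝ) : ℂ) else 0 := by
      intro i
      simp only [hjoin i]
      by_cases hP : (fun j : {v // v ∈ S} => rows i j.1) = x
      · simp only [hP, true_and]
        rw [Finset.sum_ite_eq' Finset.univ (fun v : {v : Fin N // v ∉ S} => rows i v.1)
          (fun _ => ((‖a i‖ ^ 2 : ℝ) : ℂ))]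
        simp
      · simp [hP]
    rw [Finset.sum_congr rfl (fun i _ => step2 i)]
    rw [← Finset.sum_filter]
    push_cast
    rfl
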